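/- Let F be a field of characteristic 2. On the set of pairs (r,s) ∈ F × F with r ≠ 0 and t^2 + r*t + s irreducible over F, the relation (r', s') ∼ (r, s) defined by r'/r ∈ G(r,s) and s' - (r'/r)^2 * s ∈ H(r') is an equivalence relation (reflexive, symmetric, and transitive). -/

import Mathlib

open Polynomial

section aux

variable {F : Type*} [Field F]

private lemma char2 (F : Type*) [Field F] [CharP F 2] : (2 : F) = 0 := by
  exact_mod_cast CharP.cast_eq_zero F 2

/-- irreducible quadratic has no roots -/
private lemma no_root {r s a : F}
    (h : Irreducible (X ^ 2 + C r * X + C s : F[X])) : a ^ 2 + r * a + s ≠ 0 := by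
  intro heq
  have hroot : IsRoot (X ^ 2 + C r * X + C s : F[X]) a := by
    simp [IsRoot, heq]
  obtain ⟨g, hg⟩ := dvd_iff_isRoot.mpr hroot
  have hdeg : (X ^ 2 + C r * X + C s : F[X]).natDegree = 2 := by
    compute_degree!
  rcases h.isUnit_or_isUnit hg with hu | hu
  · have := natDegree_eq_zero_of_isUnit hu
    simp [natDegree_X_sub_C] at this
  · have hX : (X - C a : F[X]) ≠ 0 := X_sub_C_ne_zero a
    have hgne : g ≠ 0 := by
      intro h0
      rw [h0, mul_zero] at hg
      have : (X ^ 2 + C r * X + C s : F[X]).natDegree = 0 := by rw [hg]; simp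
      omega
    have := natDegree_eq_zero_of_isUnit hu
    have h2 : (X ^ 2 + C r * X + C s : F[X]).natDegree = 1 + g.natDegree := by
      rw [hg, natDegree_mul hX hgne, natDegree_X_sub_C]
    omega

/-- values of the quadratic form at nonzero vectors are nonzero -/
private lemma G_ne_zero {r s x y : F}
    (h : Irreducible (X ^ 2 + C r * X + C s : F[X])) (hxy : (x, y) ≠ (0, 0)) :
    x ^ 2 + r * x * y + s * y ^ 2 ≠ 0 := by
  rcases eq_or_ne y 0 with hy | hy
  · subst hy
    have hx : x ≠ 0 := by simpa using hxy
    simpa using pow_ne_zero 2 hx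
  · intro heq
    have hkey : (x / y) ^ 2 + r * (x / y) + s = (x ^ 2 + r * x * y + s * y ^ 2) / y ^ 2 := by
      field_simp
    exact no_root (a := x / y) h (by rw [hkey, heq, zero_div])

private lemma pair_div_ne {a b c : F} (hc : c ≠ 0) (hab : (a, b) ≠ (0, 0)) :
    (a / c, b / c) ≠ (0, 0) := by
  intro h
  rw [Prod.mk.injEq] at h
  apply hab
  rw [Prod.mk.injEq]
  constructor
  · rcases _root_.div_eq_zero_iff.mp h.1 with h' | h'
    · exact h'
    · exact absurd h' hc
  · rcases _root_.div_eq_zero_iff.mp h.2 with h' | h'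
    · exact h'
    · exact absurd h' hc

end aux

open Polynomial in
theorem stmt_4 (F : Type*) [Field F] [CharP F 2] :
    Equivalence (fun p q : {p : F × F // p.1 ≠ 0 ∧ Irreducible (X ^ 2 + C p.1 * X + C p.2 : F[X])} =>
      p.1.1 / q.1.1 ∈
          {z : F | ∃ x y : F, (x, y) ≠ (0, 0) ∧ z = x ^ 2 + q.1.1 * x * y + q.1.2 * y ^ 2} ∧
        p.1.2 - (p.1.1 / q.1.1) ^ 2 * q.1.2 ∈ {y : F | ∃ x : F, y = x ^ 2 + p.1.1 * x}) := by
  have h2 : (2 : F) = 0 := char2 F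
  -- key change-of-form lemma: G(c*r, c^2*s + d^2 + c*r*d) = G(r,s)
  have key : ∀ r s c d z : F, c ≠ 0 →
      ((∃ x y : F, (x, y) ≠ (0, 0) ∧
          z = x ^ 2 + (c * r) * x * y + (c ^ 2 * s + d ^ 2 + (c * r) * d) * y ^ 2) ↔
        (∃ x y : F, (x, y) ≠ (0, 0) ∧ z = x ^ 2 + r * x * y + s * y ^ 2)) := by
    intro r s c d z hc
    constructor
    · rintro ⟨x, y, hxy, rfl⟩
      refine ⟨x + d * y, c * y, ?_, by linear_combination (-(x * y * d)) * h2⟩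
      intro hcon
      rw [Prod.mk.injEq] at hcon
      have hy : y = 0 := by
        rcases mul_eq_zero.mp hcon.2 with h | h
        · exact absurd h hc
        · exact h
      apply hxy
      rw [Prod.mk.injEq]
      refine ⟨?_, hy⟩
      have := hcon.1
      rw [hy] at this; simpa using this
    · rintro ⟨X, Y, hXY, rfl⟩
      refine ⟨X - d * (Y / c), Y / c, ?_, ?_⟩
      · intro hcon
        rw [Prod.mk.injEq] at hcon
        have hY : Y = 0 := by
          have := hcon.2
          rcases div_eq_zero_iff.mp this with h | h
          · exact h
          · exact absurd h hc
        apply hXY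
        rw [Prod.mk.injEq]
        refine ⟨?_, hY⟩
        have := hcon.1
        rw [hY] at this; simpa using this
      · have hx : (X - d * (Y / c)) + d * (Y / c) = X := by ring
        have hy : c * (Y / c) = Y := mul_div_cancel₀ Y hc
        have hid : (X - d * (Y / c)) ^ 2 + (c * r) * (X - d * (Y / c)) * (Y / c) +
              (c ^ 2 * s + d ^ 2 + (c * r) * d) * (Y / c) ^ 2 =
            ((X - d * (Y / c)) + d * (Y / c)) ^ 2
              + r * ((X - d * (Y / c)) + d * (Y / c)) * (c * (Y / c))
              + s * (c * (Y / c)) ^ 2 := by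
          linear_combination (-((X - d * (Y / c)) * (Y / c) * d)) * h2
        rw [hx, hy] at hid
        linear_combination -hid
  constructor
  · -- reflexivity
    rintro ⟨⟨r, s⟩, hr, hirr⟩
    constructor
    · exact ⟨1, 0, by simp, by rw [div_self hr]; ring⟩
    · exact ⟨0, by rw [div_self hr]; ring⟩
  · -- symmetry
    rintro ⟨⟨r1, s1⟩, hr1, hirr1⟩ ⟨⟨r2, s2⟩, hr2, hirr2⟩ ⟨⟨a, b, hab, hc⟩, ⟨d, hd⟩⟩
    simp only [Set.mem_setOf_eq] at hc hd ⊢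
    obtain ⟨c, hceq⟩ : ∃ c : F, r1 / r2 = c := ⟨_, rfl⟩
    rw [hceq] at hc hd
    have hcne : c ≠ 0 := hceq ▸ div_ne_zero hr1 hr2
    have hr1c : r1 = c * r2 := by
      rw [← hceq]; field_simp
    have hq : r2 / r1 = c⁻¹ := by rw [← hceq, inv_div]
    have hs1c : s1 = c ^ 2 * s2 + d ^ 2 + r1 * d := by linear_combination hd
    constructor
    · -- r2 / r1 = c⁻¹ ∈ G(r1,s1) = G(r2,s2)
      have hcinv : ∃ x y : F, (x, y) ≠ (0, 0) ∧
          c⁻¹ = x ^ 2 + r2 * x * y + s2 * y ^ 2 := by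
        refine ⟨a / c, b / c, pair_div_ne hcne hab, ?_⟩
        field_simp
        linear_combination hc
      have hmem := (key r2 s2 c d c⁻¹ hcne).mpr hcinv
      rw [show c * r2 = r1 from hr1c.symm] at hmem
      rw [← hs1c] at hmem
      rw [hq]
      exact hmem
    · -- s2 - (r2/r1)^2 * s1 ∈ H(r2)
      refine ⟨d * c⁻¹, ?_⟩
      rw [hq]
      have hcc : c * c⁻¹ = 1 := mul_inv_cancel₀ hcne
      field_simp
      linear_combination -hd - d * hr1c + (-(d ^ 2) - c * d * r2) * h2
  · -- transitivity
    rintro ⟨⟨r1, s1⟩, hr1, hirr1⟩ ⟨⟨r2, s2⟩, hr2, hirr2⟩ ⟨⟨r3, s3⟩, hr3, hirr3⟩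
      ⟨⟨a1, b1, hab1, hc1⟩, ⟨d1, hd1⟩⟩ ⟨⟨a2, b2, hab2, hc2⟩, ⟨d2, hd2⟩⟩
    simp only [Set.mem_setOf_eq] at hc1 hd1 hc2 hd2 ⊢
    obtain ⟨c1, hceq1⟩ : ∃ c : F, r1 / r2 = c := ⟨_, rfl⟩
    obtain ⟨c2, hceq2⟩ : ∃ c : F, r2 / r3 = c := ⟨_, rfl⟩
    rw [hceq1] at hc1 hd1
    rw [hceq2] at hc2 hd2
    have hc1ne : c1 ≠ 0 := hceq1 ▸ div_ne_zero hr1 hr2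
    have hc2ne : c2 ≠ 0 := hceq2 ▸ div_ne_zero hr2 hr3
    have hr1c : r1 = c1 * r2 := by rw [← hceq1]; field_simp
    have hr2c : r2 = c2 * r3 := by rw [← hceq2]; field_simp
    have hs2c : s2 = c2 ^ 2 * s3 + d2 ^ 2 + r2 * d2 := by linear_combination hd2
    have hdiv : r1 / r3 = c1 * c2 := by
      rw [← hceq1, ← hceq2]
      field_simp
    constructor
    · -- c1 * c2 ∈ G(r3, s3)
      have hc1mem : ∃ x y : F, (x, y) ≠ (0, 0) ∧
          c1 = x ^ 2 + r3 * x * y + s3 * y ^ 2 := by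
        apply (key r3 s3 c2 d2 c1 hc2ne).mp
        rw [show c2 * r3 = r2 from hr2c.symm, ← hs2c]
        exact ⟨a1, b1, hab1, hc1⟩
      obtain ⟨x, y, hxy, hx⟩ := hc1mem
      rw [hdiv]
      have hmulid : (x ^ 2 + r3 * x * y + s3 * y ^ 2) * (a2 ^ 2 + r3 * a2 * b2 + s3 * b2 ^ 2)
          = (x * a2 + s3 * y * b2) ^ 2
            + r3 * (x * a2 + s3 * y * b2) * (x * b2 + y * a2 + r3 * y * b2)
            + s3 * (x * b2 + y * a2 + r3 * y * b2) ^ 2 := by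
        linear_combination (-(y ^ 2 * b2 ^ 2 * r3 ^ 2 * s3) - y ^ 2 * a2 * b2 * r3 * s3
          - x * y * b2 ^ 2 * r3 * s3 - 2 * x * y * a2 * b2 * s3) * h2
      refine ⟨x * a2 + s3 * y * b2, x * b2 + y * a2 + r3 * y * b2, ?_, ?_⟩
      · intro hcon
        rw [Prod.mk.injEq] at hcon
        apply mul_ne_zero hc1ne hc2ne
        rw [hx, hc2, hmulid, hcon.1, hcon.2]
        ring
      · rw [hx, hc2]
        exact hmulid
    · -- s1 - (r1/r3)^2 * s3 ∈ H(r1)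
      refine ⟨c1 * d2 + d1, ?_⟩
      rw [hdiv]
      linear_combination hd1 + c1 ^ 2 * hd2 - c1 * d2 * hr1c - c1 * d1 * d2 * h2
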